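/- Let r ≥ 1 be an integer and let p₁, …, p_r be positive integers. Let N = 1 + Σᵢ (pᵢ − 1), and let M be the symmetric N × N integer matrix indexed by a central index c together with indices (i,j) for 1 ≤ i ≤ r and 1 ≤ j ≤ pᵢ − 1, defined by: M(c,c) = −r; M((i,j),(i,j)) = −2 for all i, j; M(c,(i,1)) = M((i,1),c) = 1 for every i with pᵢ ≥ 2; M((i,j),(i,j+1)) = M((i,j+1),(i,j)) = 1 for 1 ≤ j ≤ pᵢ − 2; and all other entries equal to 0. Then M, viewed as a real symmetric matrix, is negative definite; i.e., xᵀ M x < 0 for every nonzero vector x ∈ ℝ^N. -/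

import Mathlib

open Finset

lemma aux_sq (g : ℕ → ℝ) (m : ℕ) :
    ∑ k ∈ Finset.range (m+1), (g k - g (k+1))^2
      = g 0 ^ 2 - g (m+1)^2
        + ∑ k ∈ Finset.range (m+1), (2 * g (k+1)^2 - 2 * g k * g (k+1)) := by
  induction m with
  | zero => simp; ring
  | succ n ih =>
      rw [Finset.sum_range_succ, ih,
        Finset.sum_range_succ (fun k => 2 * g (k+1)^2 - 2 * g k * g (k+1)) (n+1)]
      ring

lemma aux_leg (g : ℕ → ℝ) (m : ℕ) (hg : g (m+1) = 0) :
    -(g 0)^2 + 2 * g 0 * g 1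
        + ∑ k ∈ Finset.range m, (-2 * g (k+1)^2 + 2 * g (k+1) * g (k+2))
      = -∑ k ∈ Finset.range (m+1), (g k - g (k+1))^2 := by
  rw [aux_sq, hg, Finset.sum_range_succ' (fun k => 2 * g (k+1)^2 - 2 * g k * g (k+1)) m]
  have h1 : ∑ k ∈ Finset.range m, (-2 * g (k+1)^2 + 2 * g (k+1) * g (k+2))
      + ∑ k ∈ Finset.range m, (2 * g (k+1+1)^2 - 2 * g (k+1) * g (k+1+1))
      = ∑ k ∈ Finset.range m, (2 * (g (k+1+1)^2 - g (k+1)^2)) := by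
    rw [← Finset.sum_add_distrib]
    exact Finset.sum_congr rfl (fun k _ => by ring)
  have h2 : ∑ k ∈ Finset.range m, (2 * (g (k+1+1)^2 - g (k+1)^2))
      = 2 * (g (m+1)^2 - g 1 ^2) := by
    rw [← Finset.mul_sum, Finset.sum_range_sub (fun k => g (k+1)^2) m]
  rw [hg] at h2
  linarith

lemma aux_const (g : ℕ → ℝ) (m : ℕ)
    (h : ∀ k ∈ Finset.range (m+1), g k - g (k+1) = 0) :
    ∀ a, a ≤ m + 1 → g a = g 0 := by
  intro a ha
  induction a with
  | zero => rfl
  | succ n ih =>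
      have h1 := h n (by simp only [Finset.mem_range]; omega)
      have h2 := ih (by omega)
      linarith

lemma aux_double (w : ℕ → ℝ) (m : ℕ) (hw : w m = 0) :
    ∑ k ∈ Finset.range m, ∑ k' ∈ Finset.range m,
        w k * ((if k = k' then (-2:ℝ) else if k+1 = k' ∨ k'+1 = k then 1 else 0) * w k')
      = ∑ k ∈ Finset.range m, (-2 * w k^2 + 2 * w k * w (k+1)) := by
  have hE : ∀ k k' : ℕ, (if k = k' then (-2:ℝ) else if k+1 = k' ∨ k'+1 = k then 1 else 0)
      = (if k = k' then (-2:ℝ) else 0) + (if k+1 = k' then 1 else 0)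
        + (if k'+1 = k then 1 else 0) := by
    intro k k'
    by_cases h : k = k' <;> by_cases h2 : k+1 = k' <;> by_cases h3 : k'+1 = k <;>
      simp [h, h2, h3] <;> omega
  have hsplit : ∀ k k' : ℕ,
      w k * ((if k = k' then (-2:ℝ) else if k+1 = k' ∨ k'+1 = k then 1 else 0) * w k')
      = (if k = k' then w k * (-2 * w k') else 0) + (if k+1 = k' then w k * w k' else 0)
        + (if k'+1 = k then w k * w k' else 0) := by
    intro k k'
    rw [hE]
    by_cases h : k = k' <;> by_cases h2 : k+1 = k' <;> by_cases h3 : k'+1 = k <;>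
      simp [h, h2, h3] <;> ring
  have step1 : ∀ k ∈ Finset.range m,
      (∑ k' ∈ Finset.range m, (if k = k' then w k * (-2 * w k') else 0)) = -2 * w k ^ 2 := by
    intro k hk
    rw [Finset.sum_ite_eq, if_pos hk]; ring
  have step2 : ∀ k ∈ Finset.range m,
      (∑ k' ∈ Finset.range m, (if k+1 = k' then w k * w k' else 0)) = w k * w (k+1) := by
    intro k hk
    rw [Finset.sum_ite_eq]
    by_cases h : k + 1 ∈ Finset.range m
    · rw [if_pos h]
    · rw [if_neg h]
      simp only [Finset.mem_range] at hk h
      have : k + 1 = m := by omega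
      rw [this, hw, mul_zero]
  have step3 : (∑ k ∈ Finset.range m, ∑ k' ∈ Finset.range m,
      (if k'+1 = k then w k * w k' else 0)) = ∑ k ∈ Finset.range m, w k * w (k+1) := by
    rw [Finset.sum_comm]
    refine Finset.sum_congr rfl (fun k' hk' => ?_)
    rw [Finset.sum_ite_eq]
    by_cases h : k' + 1 ∈ Finset.range m
    · rw [if_pos h, mul_comm]
    · rw [if_neg h]
      simp only [Finset.mem_range] at hk' h
      have : k' + 1 = m := by omega
      rw [this, hw, mul_zero]
  calc ∑ k ∈ Finset.range m, ∑ k' ∈ Finset.range m,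
        w k * ((if k = k' then (-2:ℝ) else if k+1 = k' ∨ k'+1 = k then 1 else 0) * w k')
      = ∑ k ∈ Finset.range m, ((∑ k' ∈ Finset.range m, (if k = k' then w k * (-2 * w k') else 0))
          + (∑ k' ∈ Finset.range m, (if k+1 = k' then w k * w k' else 0))
          + (∑ k' ∈ Finset.range m, (if k'+1 = k then w k * w k' else 0))) := by
        refine Finset.sum_congr rfl (fun k _ => ?_)
        rw [← Finset.sum_add_distrib, ← Finset.sum_add_distrib]
        exact Finset.sum_congr rfl (fun k' _ => hsplit k k')
    _ = ∑ k ∈ Finset.range m, (-2 * w k^2 + 2 * w k * w (k+1)) := by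
        rw [Finset.sum_add_distrib, Finset.sum_add_distrib, step3,
          Finset.sum_congr rfl step1, Finset.sum_congr rfl step2]
        rw [← Finset.sum_add_distrib, ← Finset.sum_add_distrib]
        exact Finset.sum_congr rfl (fun k _ => by ring)


/-- The intersection matrix of the star-shaped plumbing graph with a central
vertex of weight `-r` and `r` legs, where the `i`-th leg is a chain of
`p i - 1` vertices each of weight `-2`.  The index `none` is the central
vertex `c`, and `some ⟨i, j⟩` is the `(j+1)`-st vertex of the `i`-th leg
(so `j = 0` corresponds to the vertex of the leg adjacent to the center). -/
def plumbingMatrix (r : ℕ) (p : Fin r → ℕ) :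
    Matrix (Option ((i : Fin r) × Fin (p i - 1)))
      (Option ((i : Fin r) × Fin (p i - 1))) ℤ :=
  fun u v =>
    match u, v with
    | none, none => -(r : ℤ)
    | none, some ⟨_, j⟩ => if (j : ℕ) = 0 then 1 else 0
    | some ⟨_, j⟩, none => if (j : ℕ) = 0 then 1 else 0
    | some ⟨i, j⟩, some ⟨i', j'⟩ =>
        if i = i' then
          (if (j : ℕ) = (j' : ℕ) then -2
           else if (j : ℕ) + 1 = (j' : ℕ) ∨ (j' : ℕ) + 1 = (j : ℕ) then 1
           else 0)
        else 0

/-- The plumbing matrix of the star-shaped graph with central weight `-r` and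
`r` legs of `p i - 1` vertices of weight `-2`, viewed as a real symmetric
matrix, is negative definite: `xᵀ M x < 0` for every nonzero real vector `x`. -/
theorem plumbingMatrix_negDef (r : ℕ) (hr : 1 ≤ r) (p : Fin r → ℕ)
    (hp : ∀ i, 1 ≤ p i) :
    ∀ x : Option ((i : Fin r) × Fin (p i - 1)) → ℝ, x ≠ 0 →
      dotProduct x
        (Matrix.mulVec ((plumbingMatrix r p).map (fun a : ℤ => (a : ℝ))) x) < 0 := by
  intro x hx
  classical
  set M' : Matrix (Option ((i : Fin r) × Fin (p i - 1)))
      (Option ((i : Fin r) × Fin (p i - 1))) ℝ :=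
    (plumbingMatrix r p).map (fun a : ℤ => (a : ℝ)) with hM'
  set c : ℝ := x none with hc
  set g : Fin r → ℕ → ℝ := fun i k =>
    match k with
    | 0 => c
    | Nat.succ k => if h : k < p i - 1 then x (some ⟨i, ⟨k, h⟩⟩) else 0
    with hgdef
  have hg0 : ∀ i, g i 0 = c := fun i => rfl
  have hgs : ∀ (i : Fin r) (k : ℕ),
      g i (k+1) = if h : k < p i - 1 then x (some ⟨i, ⟨k, h⟩⟩) else 0 := fun i k => rfl
  have hgx : ∀ (i : Fin r) (j : Fin (p i - 1)), x (some ⟨i, j⟩) = g i ((j : ℕ)+1) := by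
    intro i j; rw [hgs, dif_pos j.isLt]
  have hgbig : ∀ (i : Fin r) (k : ℕ), p i - 1 ≤ k → g i (k+1) = 0 := by
    intro i k hk; rw [hgs, dif_neg (by omega)]
  have key : ∀ F : Option ((i : Fin r) × Fin (p i - 1)) → ℝ,
      ∑ u, F u = F none + ∑ i : Fin r, ∑ j : Fin (p i - 1), F (some ⟨i, j⟩) := by
    intro F
    rw [Fintype.sum_option, ← Finset.univ_sigma_univ, Finset.sum_sigma]
  have Mcc : M' none none = -(r:ℝ) := by
    simp [hM', plumbingMatrix, Matrix.map_apply]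
  have Mcs : ∀ (i : Fin r) (j : Fin (p i - 1)),
      M' none (some ⟨i,j⟩) = (if (j:ℕ) = 0 then (1:ℝ) else 0) := by
    intro i j
    simp only [hM', plumbingMatrix, Matrix.map_apply]
    split_ifs <;> simp
  have Msc : ∀ (i : Fin r) (j : Fin (p i - 1)),
      M' (some ⟨i,j⟩) none = (if (j:ℕ) = 0 then (1:ℝ) else 0) := by
    intro i j
    simp only [hM', plumbingMatrix, Matrix.map_apply]
    split_ifs <;> simp
  have Mss : ∀ (i : Fin r) (j : Fin (p i - 1)) (i' : Fin r) (j' : Fin (p i' - 1)),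
      M' (some ⟨i,j⟩) (some ⟨i',j'⟩) =
        if i = i' then
          (if (j:ℕ) = (j':ℕ) then (-2:ℝ)
           else if (j:ℕ)+1 = (j':ℕ) ∨ (j':ℕ)+1 = (j:ℕ) then 1 else 0)
        else 0 := by
    intro i j i' j'
    simp only [hM', plumbingMatrix, Matrix.map_apply]
    split_ifs <;> simp
  -- row sum for the central vertex
  have hA : ∑ i : Fin r, ∑ j : Fin (p i - 1), M' none (some ⟨i,j⟩) * x (some ⟨i,j⟩)
      = ∑ i : Fin r, g i 1 := by
    refine Finset.sum_congr rfl (fun i _ => ?_)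
    have h1 : ∀ j : Fin (p i - 1),
        M' none (some ⟨i,j⟩) * x (some ⟨i,j⟩)
          = (fun k => if k = 0 then g i (k+1) else 0) ((j : ℕ)) := by
      intro j
      rw [Mcs, hgx]
      by_cases h : (j:ℕ) = 0 <;> simp [h]
    rw [Finset.sum_congr rfl (fun j _ => h1 j),
      Fin.sum_univ_eq_sum_range (fun k => if k = 0 then g i (k+1) else 0) (p i - 1),
      Finset.sum_ite_eq' (Finset.range (p i - 1)) 0 (fun k => g i (k+1))]
    by_cases h : 0 < p i - 1
    · rw [if_pos (Finset.mem_range.mpr h)]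
    · rw [if_neg (by simp [Finset.mem_range]; omega)]
      rw [hgbig i 0 (by omega)]
  -- the inner sum for a leg vertex row
  have hRow : ∀ (i : Fin r) (j : Fin (p i - 1)),
      ∑ v, M' (some ⟨i,j⟩) v * x v
        = (if (j:ℕ) = 0 then (1:ℝ) else 0) * c
          + ∑ k' ∈ Finset.range (p i - 1),
              ((if (j:ℕ) = k' then (-2:ℝ)
                else if (j:ℕ)+1 = k' ∨ k'+1 = (j:ℕ) then 1 else 0) * g i (k'+1)) := by
    intro i j
    rw [key (fun v => M' (some ⟨i,j⟩) v * x v), Msc]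
    congr 1
    have hcol : ∀ (i' : Fin r), (∑ j' : Fin (p i' - 1),
        M' (some ⟨i,j⟩) (some ⟨i',j'⟩) * x (some ⟨i',j'⟩))
        = if i = i' then (∑ j' : Fin (p i' - 1),
            ((if (j:ℕ) = (j':ℕ) then (-2:ℝ)
              else if (j:ℕ)+1 = (j':ℕ) ∨ (j':ℕ)+1 = (j:ℕ) then 1 else 0)
             * x (some ⟨i',j'⟩))) else 0 := by
      intro i'
      by_cases h : i = i'
      · rw [if_pos h]
        refine Finset.sum_congr rfl (fun j' _ => ?_)
        rw [Mss, if_pos h]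
      · rw [if_neg h]
        refine Finset.sum_eq_zero (fun j' _ => ?_)
        rw [Mss, if_neg h, zero_mul]
    rw [Finset.sum_congr rfl (fun i' _ => hcol i'),
      Finset.sum_ite_eq Finset.univ i, if_pos (Finset.mem_univ i)]
    have h2 : ∀ j' : Fin (p i - 1),
        ((if (j:ℕ) = (j':ℕ) then (-2:ℝ)
          else if (j:ℕ)+1 = (j':ℕ) ∨ (j':ℕ)+1 = (j:ℕ) then 1 else 0)
         * x (some ⟨i,j'⟩))
        = (fun k' => (if (j:ℕ) = k' then (-2:ℝ)
            else if (j:ℕ)+1 = k' ∨ k'+1 = (j:ℕ) then 1 else 0) * g i (k'+1)) ((j':ℕ)) := by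
      intro j'; rw [hgx]
    rw [Finset.sum_congr rfl (fun j' _ => h2 j')]
    exact Fin.sum_univ_eq_sum_range (fun k' => (if (j:ℕ) = k' then (-2:ℝ)
      else if (j:ℕ)+1 = k' ∨ k'+1 = (j:ℕ) then 1 else 0) * g i (k'+1)) (p i - 1)
  -- main identity
  have main : dotProduct x (M'.mulVec x)
      = ∑ i : Fin r, -(∑ k ∈ Finset.range ((p i - 1)+1), (g i k - g i (k+1))^2) := by
    have e1 : dotProduct x (M'.mulVec x) = ∑ u, x u * ∑ v, M' u v * x v := rfl
    rw [e1, key (fun u => x u * ∑ v, M' u v * x v)]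
    rw [key (fun v => M' none v * x v), Mcc, hA]
    have e2 : ∀ (i : Fin r), (∑ j : Fin (p i - 1),
        x (some ⟨i,j⟩) * ∑ v, M' (some ⟨i,j⟩) v * x v)
        = g i 1 * c + ∑ k ∈ Finset.range (p i - 1),
            (-2 * g i (k+1)^2 + 2 * g i (k+1) * g i (k+2)) := by
      intro i
      have h3 : ∀ j : Fin (p i - 1),
          x (some ⟨i,j⟩) * ∑ v, M' (some ⟨i,j⟩) v * x v
          = (fun k => g i (k+1) * ((if k = 0 then (1:ℝ) else 0) * c
              + ∑ k' ∈ Finset.range (p i - 1),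
                ((if k = k' then (-2:ℝ)
                  else if k+1 = k' ∨ k'+1 = k then 1 else 0) * g i (k'+1)))) ((j:ℕ)) := by
        intro j; rw [hRow, hgx]
      have h3' : (∑ j : Fin (p i - 1),
          x (some ⟨i,j⟩) * ∑ v, M' (some ⟨i,j⟩) v * x v)
          = ∑ k ∈ Finset.range (p i - 1),
              g i (k+1) * ((if k = 0 then (1:ℝ) else 0) * c
              + ∑ k' ∈ Finset.range (p i - 1),
                ((if k = k' then (-2:ℝ)
                  else if k+1 = k' ∨ k'+1 = k then 1 else 0) * g i (k'+1))) := by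
        rw [Finset.sum_congr rfl (fun j _ => h3 j)]
        exact Fin.sum_univ_eq_sum_range (fun k => g i (k+1) * ((if k = 0 then (1:ℝ) else 0) * c
              + ∑ k' ∈ Finset.range (p i - 1),
                ((if k = k' then (-2:ℝ)
                  else if k+1 = k' ∨ k'+1 = k then 1 else 0) * g i (k'+1)))) (p i - 1)
      rw [h3']
      have h4 : ∀ k ∈ Finset.range (p i - 1),
          g i (k+1) * ((if k = 0 then (1:ℝ) else 0) * c
            + ∑ k' ∈ Finset.range (p i - 1),
                ((if k = k' then (-2:ℝ)
                  else if k+1 = k' ∨ k'+1 = k then 1 else 0) * g i (k'+1)))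
          = (if k = 0 then g i (k+1) * c else 0)
            + ∑ k' ∈ Finset.range (p i - 1),
                g i (k+1) * ((if k = k' then (-2:ℝ)
                  else if k+1 = k' ∨ k'+1 = k then 1 else 0) * g i (k'+1)) := by
        intro k _
        rw [mul_add, Finset.mul_sum]
        congr 1
        by_cases h : k = 0 <;> simp [h]
      rw [Finset.sum_congr rfl h4, Finset.sum_add_distrib,
        Finset.sum_ite_eq' (Finset.range (p i - 1)) 0 (fun k => g i (k+1) * c),
        aux_double (fun k => g i (k+1)) (p i - 1) (hgbig i (p i - 1) le_rfl)]
      congr 1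
      by_cases h : 0 < p i - 1
      · rw [if_pos (Finset.mem_range.mpr h)]
      · rw [if_neg (by simp [Finset.mem_range]; omega), hgbig i 0 (by omega), zero_mul]
    rw [Finset.sum_congr rfl (fun i _ => e2 i)]
    have e3 : c * (-(r:ℝ) * c + ∑ i : Fin r, g i 1)
        = ∑ i : Fin r, (-c^2 + c * g i 1) := by
      rw [Finset.sum_add_distrib, Finset.sum_const, ← Finset.mul_sum]
      simp only [Finset.card_univ, Fintype.card_fin, nsmul_eq_mul]
      ring
    rw [e3, ← Finset.sum_add_distrib]
    refine Finset.sum_congr rfl (fun i _ => ?_)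
    rw [← aux_leg (g i) (p i - 1) (hgbig i (p i - 1) le_rfl), hg0 i]
    ring
  rw [main]
  -- positivity
  have hTnn : ∀ i : Fin r, (0:ℝ) ≤ ∑ k ∈ Finset.range ((p i - 1)+1), (g i k - g i (k+1))^2 :=
    fun i => Finset.sum_nonneg (fun k _ => sq_nonneg _)
  have hzero : ∀ i : Fin r,
      (∑ k ∈ Finset.range ((p i - 1)+1), (g i k - g i (k+1))^2) = 0 →
      ∀ a, a ≤ (p i - 1) + 1 → g i a = c := by
    intro i h0 a ha
    have h1 := (Finset.sum_eq_zero_iff_of_nonneg (fun k _ => sq_nonneg _)).mp h0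
    have h2 : ∀ k ∈ Finset.range ((p i - 1)+1), g i k - g i (k+1) = 0 := by
      intro k hk
      have := h1 k hk
      exact pow_eq_zero_iff (n := 2) (by norm_num) |>.mp this
    rw [← hg0 i]
    exact aux_const (g i) (p i - 1) h2 a ha
  obtain ⟨u, hu⟩ := Function.ne_iff.mp hx
  have hex : ∃ i : Fin r, (∑ k ∈ Finset.range ((p i - 1)+1), (g i k - g i (k+1))^2) ≠ 0 := by
    match u with
    | none =>
        refine ⟨⟨0, hr⟩, fun h0 => ?_⟩
        have h1 := hzero _ h0 ((p ⟨0, hr⟩ - 1) + 1) le_rfl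
        rw [hgbig _ (p ⟨0, hr⟩ - 1) le_rfl] at h1
        exact hu (by rw [← hc, ← h1]; simp [hgbig])
    | some ⟨i, j⟩ =>
        refine ⟨i, fun h0 => ?_⟩
        have h1 := hzero i h0 ((j:ℕ)+1) (by omega)
        have h2 := hzero i h0 ((p i - 1) + 1) le_rfl
        rw [hgbig i (p i - 1) le_rfl] at h2
        exact hu (by rw [hgx i j, h1, ← h2]; simp)
  obtain ⟨i₀, hi₀⟩ := hex
  have hpos : (0:ℝ) < ∑ i : Fin r,
      ∑ k ∈ Finset.range ((p i - 1)+1), (g i k - g i (k+1))^2 := by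
    refine Finset.sum_pos' (fun i _ => hTnn i) ⟨i₀, Finset.mem_univ _, ?_⟩
    exact (hTnn i₀).lt_of_ne (Ne.symm hi₀)
  have : ∑ i : Fin r, -(∑ k ∈ Finset.range ((p i - 1)+1), (g i k - g i (k+1))^2)
      = -∑ i : Fin r, ∑ k ∈ Finset.range ((p i - 1)+1), (g i k - g i (k+1))^2 := by
    rw [← Finset.sum_neg_distrib]
  rw [this]
  linarith
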